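/- For the Følner sets F_N = {A^{α} B^{β} C^{γ} : 0 ≤ α, β, γ ≤ N−1} in the semigroup T generated by A, B, C, one has A F_N ∩ F_N = {A^{α} B^{β} C^{γ} : 1 ≤ α ≤ N−1, 0 ≤ β, γ ≤ N−1}, and hence |A F_N ∩ F_N| = N²(N−1). -/

import Mathlib

def MatA : Matrix (Fin 2) (Fin 2) ℤ := !![1, 0; 0, 2]
def MatB : Matrix (Fin 2) (Fin 2) ℤ := !![2, 0; 0, 1]
def MatC : Matrix (Fin 2) (Fin 2) ℤ := !![0, 2; 3, 0]

/-- The multiplicative semigroup generated by `A`, `B`, `C`. -/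
def SemigroupT : Subsemigroup (Matrix (Fin 2) (Fin 2) ℤ) :=
  Subsemigroup.closure {MatA, MatB, MatC}

/-- The Følner sets `F_N = {A^α B^β C^γ : 0 ≤ α, β, γ ≤ N-1}`. -/
def FolnerF (N : ℕ) : Finset (Matrix (Fin 2) (Fin 2) ℤ) :=
  (Finset.range N ×ˢ Finset.range N ×ˢ Finset.range N).image
    fun p => MatA ^ p.1 * MatB ^ p.2.1 * MatC ^ p.2.2

lemma Apow (a : ℕ) : MatA ^ a = !![1, 0; 0, 2^a] := by
  induction a with
  | zero => simp [Matrix.one_fin_two]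
  | succ n ih => rw [pow_succ, ih]; simp [MatA, Matrix.mul_fin_two]; ring

lemma Bpow (b : ℕ) : MatB ^ b = !![2^b, 0; 0, 1] := by
  induction b with
  | zero => simp [Matrix.one_fin_two]
  | succ n ih => rw [pow_succ, ih]; simp [MatB, Matrix.mul_fin_two]; ring

lemma Cpow (c : ℕ) :
    MatC ^ c = if c % 2 = 0 then !![(6:ℤ)^(c/2), 0; 0, 6^(c/2)]
      else !![0, 2*6^(c/2); 3*6^(c/2), 0] := by
  have hc : c = 2 * (c / 2) + c % 2 := (Nat.div_add_mod c 2).symm.trans (by ring)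
  have hsq : MatC ^ 2 = (6:ℤ) • 1 := by
    simp [pow_two, MatC, Matrix.mul_fin_two, Matrix.smul_of, Matrix.one_fin_two]
  have key : MatC ^ c = (6:ℤ)^(c/2) • MatC ^ (c % 2) := by
    conv_lhs => rw [hc]
    rw [pow_add, pow_mul, hsq, smul_pow, one_pow, smul_mul_assoc, one_mul]
  rcases Nat.mod_two_eq_zero_or_one c with h | h <;> rw [key, h] <;>
    simp [MatC, Matrix.one_fin_two, Matrix.smul_of] <;> ring_nf <;> simp

lemma fval (a b c : ℕ) : MatA ^ a * MatB ^ b * MatC ^ c =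
    if c % 2 = 0 then !![2^(c/2+b)*3^(c/2), 0; 0, 2^(c/2+a)*3^(c/2)]
      else !![0, 2^(c/2+b+1)*3^(c/2); 2^(c/2+a)*3^(c/2+1), 0] := by
  rw [Apow, Bpow, Cpow]
  rcases Nat.mod_two_eq_zero_or_one c with h | h <;> simp only [h, reduceIte] <;>
    ext i j <;> fin_cases i <;> fin_cases j <;>
    simp [Matrix.mul_fin_two] <;> rw [show (6:ℤ) = 2*3 by norm_num, mul_pow] <;> ring

lemma nat23 {x y z w : ℕ} (h : 2^x*3^y = 2^z*3^w) : x = z ∧ y = w := by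
  have h2 := congrArg (fun n => n.factorization 2) h
  have h3 := congrArg (fun n => n.factorization 3) h
  simp [Nat.factorization_mul (pow_ne_zero x (a := 2) (by norm_num)) (pow_ne_zero y (a := 3) (by norm_num)),
    Nat.factorization_mul (pow_ne_zero z (a := 2) (by norm_num)) (pow_ne_zero w (a := 3) (by norm_num)),
    Nat.Prime.factorization_pow, Nat.prime_two, Nat.prime_three] at h2 h3
  exact ⟨h2, h3⟩

lemma int23 {x y z w : ℕ} (h : (2:ℤ)^x*3^y = 2^z*3^w) : x = z ∧ y = w := by
  have h' : ((2^x*3^y : ℕ) : ℤ) = ((2^z*3^w : ℕ) : ℤ) := by push_cast; exact h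
  exact nat23 (Nat.cast_injective h')

lemma f_inj : Function.Injective
    (fun p : ℕ × ℕ × ℕ => MatA ^ p.1 * MatB ^ p.2.1 * MatC ^ p.2.2) := by
  rintro ⟨a, b, c⟩ ⟨a', b', c'⟩ h
  simp only [fval] at h
  have hrec : c/2 = c'/2 → c % 2 = c' % 2 → a = a' → b = b' → (a,b,c) = ((a',b',c') : ℕ×ℕ×ℕ) := by
    intro h1 h2 h3 h4
    have : c = c' := by omega
    simp_all
  rcases Nat.mod_two_eq_zero_or_one c with hc | hc <;>
    rcases Nat.mod_two_eq_zero_or_one c' with hc' | hc' <;>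
    rw [hc, hc'] at h
  · have h00 := congrFun (congrFun h 0) 0
    have h11 := congrFun (congrFun h 1) 1
    simp at h00 h11
    obtain ⟨e1, e2⟩ := int23 h00
    obtain ⟨e3, e4⟩ := int23 h11
    exact hrec e2 (hc.trans hc'.symm) (by omega) (by omega)
  · have h00 := congrFun (congrFun h 0) 0
    simp at h00
  · have h00 := congrFun (congrFun h 0) 0
    simp at h00
  · have h01 := congrFun (congrFun h 0) 1
    have h10 := congrFun (congrFun h 1) 0
    simp at h01 h10
    obtain ⟨e1, e2⟩ := int23 h01
    obtain ⟨e3, e4⟩ := int23 h10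
    exact hrec e2 (hc.trans hc'.symm) (by omega) (by omega)

lemma hstep (a b c : ℕ) :
    MatA * (MatA ^ a * MatB ^ b * MatC ^ c) = MatA ^ (a+1) * MatB ^ b * MatC ^ c := by
  rw [pow_succ', mul_assoc, mul_assoc, mul_assoc]

/-- `A F_N ∩ F_N = {A^α B^β C^γ : 1 ≤ α ≤ N-1, 0 ≤ β, γ ≤ N-1}` and hence
`|A F_N ∩ F_N| = N² (N-1)`. -/
theorem matrixT_inter_card (N : ℕ) (hN : 2 ≤ N) :
    (((FolnerF N).image fun m => MatA * m) ∩ FolnerF N =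
      (Finset.Ico 1 N ×ˢ Finset.range N ×ˢ Finset.range N).image
        (fun p => MatA ^ p.1 * MatB ^ p.2.1 * MatC ^ p.2.2)) ∧
    (((FolnerF N).image fun m => MatA * m) ∩ FolnerF N).card = N ^ 2 * (N - 1) := by
  have hset : ((FolnerF N).image fun m => MatA * m) ∩ FolnerF N =
      (Finset.Ico 1 N ×ˢ Finset.range N ×ˢ Finset.range N).image
        (fun p => MatA ^ p.1 * MatB ^ p.2.1 * MatC ^ p.2.2) := by
    ext m
    simp only [Finset.mem_inter, Finset.mem_image, FolnerF, Finset.mem_product,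
      Finset.mem_range, Finset.mem_Ico]
    constructor
    · rintro ⟨⟨x, ⟨⟨a, b, c⟩, ⟨ha, hb, hc⟩, rfl⟩, rfl⟩, ⟨a', b', c'⟩, ⟨ha', hb', hc'⟩, hm⟩
      have key : MatA ^ (a+1) * MatB ^ b * MatC ^ c = MatA ^ a' * MatB ^ b' * MatC ^ c' := by
        rw [← hstep]; exact hm.symm
      have := f_inj (a₁ := (a+1,b,c)) (a₂ := (a',b',c')) key
      simp only [Prod.mk.injEq] at this
      obtain ⟨rfl, rfl, rfl⟩ := this
      exact ⟨(a+1, b, c), ⟨⟨Nat.succ_pos a, by omega⟩, hb, hc⟩, (hstep a b c).symm⟩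
    · rintro ⟨⟨a, b, c⟩, ⟨⟨ha1, ha2⟩, hb, hc⟩, rfl⟩
      refine ⟨⟨MatA ^ (a-1) * MatB ^ b * MatC ^ c,
        ⟨(a-1, b, c), ⟨by omega, hb, hc⟩, rfl⟩, ?_⟩,
        ⟨(a, b, c), ⟨by omega, hb, hc⟩, rfl⟩⟩
      rw [hstep, show a - 1 + 1 = a by omega]

  refine ⟨hset, ?_⟩
  rw [hset, Finset.card_image_of_injective _ f_inj, Finset.card_product,
    Finset.card_product, Nat.card_Ico, Finset.card_range]
  rw [sq]
  ring
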